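/- Fix ρ > 0, a tensor X ∈ ℝ^{I₁×I₂×I₃}, matrices C_n ∈ ℝ^{d_n × ∏_{j≠n} d_j} for n = 1,2,3, and column-orthonormal matrices U ∈ ℝ^{I₁×d₁}, V ∈ ℝ^{I₂×d₂}, W ∈ ℝ^{I₃×d₃}. Consider h(G) = Σ_{n=1}^{3} (ρ/2)‖G_{(n)} − C_n‖²_F + (1/2)‖X − G ×₁ U ×₂ V ×₃ W‖²_F over G ∈ ℝ^{d₁×d₂×d₃}. Then h has the unique minimizer G = (1/(1+3ρ)) (A + ρ B), where A = X ×₁ Uᵀ ×₂ Vᵀ ×₃ Wᵀ and B = Σ_{n=1}^{3} refold_n(C_n). -/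

import Mathlib

open scoped BigOperators
open Matrix Kronecker Filter Topology

/-- A third-order real tensor of size `I₁ × I₂ × I₃`. -/
abbrev Tensor (I₁ I₂ I₃ : ℕ) : Type := Fin I₁ → Fin I₂ → Fin I₃ → ℝ

namespace Tensor

variable {I₁ I₂ I₃ J d₁ d₂ d₃ : ℕ}

/-- The 1-mode product `X ×₁ U`. -/
noncomputable def mode1 (X : Tensor I₁ I₂ I₃) (U : Matrix (Fin J) (Fin I₁) ℝ) : Tensor J I₂ I₃ :=
  fun j i₂ i₃ => ∑ i₁, X i₁ i₂ i₃ * U j i₁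

/-- The 2-mode product `X ×₂ V`. -/
noncomputable def mode2 (X : Tensor I₁ I₂ I₃) (V : Matrix (Fin J) (Fin I₂) ℝ) : Tensor I₁ J I₃ :=
  fun i₁ j i₃ => ∑ i₂, X i₁ i₂ i₃ * V j i₂

/-- The 3-mode product `X ×₃ W`. -/
noncomputable def mode3 (X : Tensor I₁ I₂ I₃) (W : Matrix (Fin J) (Fin I₃) ℝ) : Tensor I₁ I₂ J :=
  fun i₁ i₂ j => ∑ i₃, X i₁ i₂ i₃ * W j i₃

/-- `G ×₁ U ×₂ V ×₃ W`. -/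
noncomputable def tucker (G : Tensor d₁ d₂ d₃) (U : Matrix (Fin I₁) (Fin d₁) ℝ)
    (V : Matrix (Fin I₂) (Fin d₂) ℝ) (W : Matrix (Fin I₃) (Fin d₃) ℝ) : Tensor I₁ I₂ I₃ :=
  mode3 (mode2 (mode1 G U) V) W

/-- Mode-1 unfolding `X₍₁₎`; columns are indexed by pairs `(i₃, i₂)` (with `i₂` varying fastest,
matching `j = 1 + (i₂ - 1) + (i₃ - 1)·I₂`). -/
def unfold1 (X : Tensor I₁ I₂ I₃) : Matrix (Fin I₁) (Fin I₃ × Fin I₂) ℝ :=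
  fun i₁ p => X i₁ p.2 p.1

/-- Mode-2 unfolding `X₍₂₎`; columns indexed by `(i₃, i₁)` with `i₁` fastest. -/
def unfold2 (X : Tensor I₁ I₂ I₃) : Matrix (Fin I₂) (Fin I₃ × Fin I₁) ℝ :=
  fun i₂ p => X p.2 i₂ p.1

/-- Mode-3 unfolding `X₍₃₎`; columns indexed by `(i₂, i₁)` with `i₁` fastest. -/
def unfold3 (X : Tensor I₁ I₂ I₃) : Matrix (Fin I₃) (Fin I₂ × Fin I₁) ℝ :=
  fun i₃ p => X p.2 p.1 i₃

/-- Refolding of a mode-1 unfolded matrix back into a tensor. -/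
def refold1 (M : Matrix (Fin d₁) (Fin d₃ × Fin d₂) ℝ) : Tensor d₁ d₂ d₃ :=
  fun i₁ i₂ i₃ => M i₁ (i₃, i₂)

/-- Refolding of a mode-2 unfolded matrix back into a tensor. -/
def refold2 (M : Matrix (Fin d₂) (Fin d₃ × Fin d₁) ℝ) : Tensor d₁ d₂ d₃ :=
  fun i₁ i₂ i₃ => M i₂ (i₃, i₁)

/-- Refolding of a mode-3 unfolded matrix back into a tensor. -/
def refold3 (M : Matrix (Fin d₃) (Fin d₂ × Fin d₁) ℝ) : Tensor d₁ d₂ d₃ :=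
  fun i₁ i₂ i₃ => M i₃ (i₂, i₁)

/-- Tensor inner product `⟨A, B⟩`. -/
def tinner (A B : Tensor I₁ I₂ I₃) : ℝ := ∑ i₁, ∑ i₂, ∑ i₃, A i₁ i₂ i₃ * B i₁ i₂ i₃

/-- Squared Frobenius norm `‖X‖²_F`. -/
def frobSq (X : Tensor I₁ I₂ I₃) : ℝ := ∑ i₁, ∑ i₂, ∑ i₃, (X i₁ i₂ i₃) ^ 2

/-- Frobenius norm `‖X‖_F`. -/
noncomputable def frob (X : Tensor I₁ I₂ I₃) : ℝ := Real.sqrt (frobSq X)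

/-- Hadamard (entrywise) product of tensors. -/
def hadamard (A B : Tensor I₁ I₂ I₃) : Tensor I₁ I₂ I₃ := fun i₁ i₂ i₃ => A i₁ i₂ i₃ * B i₁ i₂ i₃

/-- `P_Ω(X)`: agrees with `X` on `Ω` and is zero elsewhere. -/
def proj (Ω : Set (Fin I₁ × Fin I₂ × Fin I₃)) [DecidablePred (· ∈ Ω)] (X : Tensor I₁ I₂ I₃) :
    Tensor I₁ I₂ I₃ := fun i₁ i₂ i₃ => if (i₁, i₂, i₃) ∈ Ω then X i₁ i₂ i₃ else 0

/-- `P_Ω^⊥(X) = X - P_Ω(X)`. -/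
def projc (Ω : Set (Fin I₁ × Fin I₂ × Fin I₃)) [DecidablePred (· ∈ Ω)] (X : Tensor I₁ I₂ I₃) :
    Tensor I₁ I₂ I₃ := X - proj Ω X

/-- The 0/1 indicator tensor of an index set `Ω`. -/
def indic (Ω : Set (Fin I₁ × Fin I₂ × Fin I₃)) [DecidablePred (· ∈ Ω)] : Tensor I₁ I₂ I₃ :=
  fun i₁ i₂ i₃ => if (i₁, i₂, i₃) ∈ Ω then 1 else 0

end Tensor

namespace MatrixAux

/-- The singular values of a real matrix `M`: square roots of the eigenvalues of `MᴴM`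
(for real matrices `Mᴴ = Mᵀ`). -/
noncomputable def singularValues {m n : Type*} [Fintype m] [Fintype n] [DecidableEq n]
    (M : Matrix m n ℝ) : n → ℝ :=
  fun i => Real.sqrt (((show (Mᵀ * M).IsHermitian by
    rw [← Matrix.conjTranspose_eq_transpose_of_trivial]
    exact Matrix.isHermitian_conjTranspose_mul_self M)).eigenvalues i)

/-- The Schatten `p`-norm of a real matrix, `(∑ᵢ σᵢᵖ)^(1/p)`. -/
noncomputable def schattenNorm (p : ℝ) {m n : Type*} [Fintype m] [Fintype n] [DecidableEq n]
    (M : Matrix m n ℝ) : ℝ :=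
  (∑ i, singularValues M i ^ p) ^ (1 / p)

/-- The trace norm (nuclear norm) of a real matrix: the sum of its singular values. -/
noncomputable def traceNorm {m n : Type*} [Fintype m] [Fintype n] [DecidableEq n]
    (M : Matrix m n ℝ) : ℝ :=
  ∑ i, singularValues M i

/-- Squared Frobenius norm of a matrix. -/
def frobSq {m n : Type*} [Fintype m] [Fintype n] (M : Matrix m n ℝ) : ℝ := ∑ i, ∑ j, (M i j) ^ 2

/-- Frobenius norm of a matrix. -/
noncomputable def frob {m n : Type*} [Fintype m] [Fintype n] (M : Matrix m n ℝ) : ℝ :=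
  Real.sqrt (frobSq M)

/-- Frobenius (trace) inner product of matrices. -/
def minner {m n : Type*} [Fintype m] [Fintype n] (A B : Matrix m n ℝ) : ℝ :=
  ∑ i, ∑ j, A i j * B i j

end MatrixAux

/-- The Schatten `p`-norm of a third-order tensor: the average of the Schatten `p`-norms of its
three mode-`n` unfoldings. -/
noncomputable def tensorSchattenNorm (p : ℝ) {I₁ I₂ I₃ : ℕ} (X : Tensor I₁ I₂ I₃) : ℝ :=
  (MatrixAux.schattenNorm p (Tensor.unfold1 X) + MatrixAux.schattenNorm p (Tensor.unfold2 X)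
    + MatrixAux.schattenNorm p (Tensor.unfold3 X)) / 3

section Aux
open Tensor MatrixAux
variable {I₁ I₂ I₃ J d₁ d₂ d₃ : ℕ}

lemma minner_eq_trace {m n : Type*} [Fintype m] [Fintype n] (A B : Matrix m n ℝ) :
    minner A B = Matrix.trace (Aᵀ * B) := by
  simp only [minner, Matrix.trace, Matrix.diag_apply, Matrix.mul_apply, Matrix.transpose_apply]
  exact Finset.sum_comm

lemma minner_mul_mul {m n k : Type*} [Fintype m] [Fintype n] [Fintype k] [DecidableEq n]
    (U : Matrix m n ℝ) (hU : Uᵀ * U = 1) (A B : Matrix n k ℝ) :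
    minner (U * A) (U * B) = minner A B := by
  rw [minner_eq_trace, minner_eq_trace, Matrix.transpose_mul, Matrix.mul_assoc,
    ← Matrix.mul_assoc Uᵀ U B, hU, Matrix.one_mul]

lemma minner_mul_left {m n k : Type*} [Fintype m] [Fintype n] [Fintype k]
    (U : Matrix m n ℝ) (A : Matrix n k ℝ) (B : Matrix m k ℝ) :
    minner (U * A) B = minner A (Uᵀ * B) := by
  rw [minner_eq_trace, minner_eq_trace, Matrix.transpose_mul, Matrix.mul_assoc]

lemma unfold1_mode1 (G : Tensor I₁ I₂ I₃) (U : Matrix (Fin J) (Fin I₁) ℝ) :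
    unfold1 (mode1 G U) = U * unfold1 G := by
  funext j p
  simp only [unfold1, mode1, Matrix.mul_apply]
  exact Finset.sum_congr rfl fun a _ => mul_comm _ _

lemma unfold2_mode2 (G : Tensor I₁ I₂ I₃) (V : Matrix (Fin J) (Fin I₂) ℝ) :
    unfold2 (mode2 G V) = V * unfold2 G := by
  funext j p
  simp only [unfold2, mode2, Matrix.mul_apply]
  exact Finset.sum_congr rfl fun a _ => mul_comm _ _

lemma unfold3_mode3 (G : Tensor I₁ I₂ I₃) (W : Matrix (Fin J) (Fin I₃) ℝ) :
    unfold3 (mode3 G W) = W * unfold3 G := by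
  funext j p
  simp only [unfold3, mode3, Matrix.mul_apply]
  exact Finset.sum_congr rfl fun a _ => mul_comm _ _

lemma tinner_eq_minner_unfold1 (A B : Tensor I₁ I₂ I₃) :
    tinner A B = minner (unfold1 A) (unfold1 B) := by
  simp only [tinner, minner, unfold1, Fintype.sum_prod_type]
  exact Finset.sum_congr rfl fun i₁ _ => Finset.sum_comm

lemma tinner_eq_minner_unfold2 (A B : Tensor I₁ I₂ I₃) :
    tinner A B = minner (unfold2 A) (unfold2 B) := by
  simp only [tinner, minner, unfold2, Fintype.sum_prod_type]
  rw [Finset.sum_comm]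
  exact Finset.sum_congr rfl fun i₂ _ => Finset.sum_comm

lemma tinner_eq_minner_unfold3 (A B : Tensor I₁ I₂ I₃) :
    tinner A B = minner (unfold3 A) (unfold3 B) := by
  simp only [tinner, minner, unfold3, Fintype.sum_prod_type]
  rw [show (∑ i₁, ∑ i₂, ∑ i₃, A i₁ i₂ i₃ * B i₁ i₂ i₃)
      = ∑ i₁, ∑ i₃, ∑ i₂, A i₁ i₂ i₃ * B i₁ i₂ i₃ from
    Finset.sum_congr rfl fun _ _ => Finset.sum_comm, Finset.sum_comm]
  exact Finset.sum_congr rfl fun _ _ => Finset.sum_comm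

lemma tinner_mode1_iso {d : ℕ} (G G' : Tensor d I₂ I₃) (U : Matrix (Fin J) (Fin d) ℝ)
    (hU : Uᵀ * U = 1) : tinner (mode1 G U) (mode1 G' U) = tinner G G' := by
  rw [tinner_eq_minner_unfold1, unfold1_mode1, unfold1_mode1, minner_mul_mul U hU,
    ← tinner_eq_minner_unfold1]

lemma tinner_mode2_iso {d : ℕ} (G G' : Tensor I₁ d I₃) (V : Matrix (Fin J) (Fin d) ℝ)
    (hV : Vᵀ * V = 1) : tinner (mode2 G V) (mode2 G' V) = tinner G G' := by
  rw [tinner_eq_minner_unfold2, unfold2_mode2, unfold2_mode2, minner_mul_mul V hV,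
    ← tinner_eq_minner_unfold2]

lemma tinner_mode3_iso {d : ℕ} (G G' : Tensor I₁ I₂ d) (W : Matrix (Fin J) (Fin d) ℝ)
    (hW : Wᵀ * W = 1) : tinner (mode3 G W) (mode3 G' W) = tinner G G' := by
  rw [tinner_eq_minner_unfold3, unfold3_mode3, unfold3_mode3, minner_mul_mul W hW,
    ← tinner_eq_minner_unfold3]

lemma tinner_mode1_adj {d : ℕ} (X : Tensor J I₂ I₃) (G : Tensor d I₂ I₃)
    (U : Matrix (Fin J) (Fin d) ℝ) : tinner X (mode1 G U) = tinner (mode1 X Uᵀ) G := by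
  rw [tinner_eq_minner_unfold1, unfold1_mode1, tinner_eq_minner_unfold1, unfold1_mode1]
  rw [minner_eq_trace, minner_eq_trace, Matrix.transpose_mul, Matrix.mul_assoc, Matrix.transpose_transpose]

lemma tinner_mode2_adj {d : ℕ} (X : Tensor I₁ J I₃) (G : Tensor I₁ d I₃)
    (V : Matrix (Fin J) (Fin d) ℝ) : tinner X (mode2 G V) = tinner (mode2 X Vᵀ) G := by
  rw [tinner_eq_minner_unfold2, unfold2_mode2, tinner_eq_minner_unfold2, unfold2_mode2]
  rw [minner_eq_trace, minner_eq_trace, Matrix.transpose_mul, Matrix.mul_assoc, Matrix.transpose_transpose]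

lemma tinner_mode3_adj {d : ℕ} (X : Tensor I₁ I₂ J) (G : Tensor I₁ I₂ d)
    (W : Matrix (Fin J) (Fin d) ℝ) : tinner X (mode3 G W) = tinner (mode3 X Wᵀ) G := by
  rw [tinner_eq_minner_unfold3, unfold3_mode3, tinner_eq_minner_unfold3, unfold3_mode3]
  rw [minner_eq_trace, minner_eq_trace, Matrix.transpose_mul, Matrix.mul_assoc, Matrix.transpose_transpose]

lemma mode1_mode2_comm {e₁ e₂ : ℕ} (X : Tensor I₁ I₂ I₃) (U : Matrix (Fin e₁) (Fin I₁) ℝ)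
    (V : Matrix (Fin e₂) (Fin I₂) ℝ) : mode2 (mode1 X U) V = mode1 (mode2 X V) U := by
  funext j₁ j₂ i₃
  simp only [mode1, mode2, Finset.sum_mul]
  rw [Finset.sum_comm]
  exact Finset.sum_congr rfl fun a _ => Finset.sum_congr rfl fun b _ => by ring

lemma mode1_mode3_comm {e₁ e₃ : ℕ} (X : Tensor I₁ I₂ I₃) (U : Matrix (Fin e₁) (Fin I₁) ℝ)
    (W : Matrix (Fin e₃) (Fin I₃) ℝ) : mode3 (mode1 X U) W = mode1 (mode3 X W) U := by
  funext j₁ i₂ j₃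
  simp only [mode1, mode3, Finset.sum_mul]
  rw [Finset.sum_comm]
  exact Finset.sum_congr rfl fun a _ => Finset.sum_congr rfl fun b _ => by ring

lemma mode2_mode3_comm {e₂ e₃ : ℕ} (X : Tensor I₁ I₂ I₃) (V : Matrix (Fin e₂) (Fin I₂) ℝ)
    (W : Matrix (Fin e₃) (Fin I₃) ℝ) : mode3 (mode2 X V) W = mode2 (mode3 X W) V := by
  funext i₁ j₂ j₃
  simp only [mode2, mode3, Finset.sum_mul]
  rw [Finset.sum_comm]
  exact Finset.sum_congr rfl fun a _ => Finset.sum_congr rfl fun b _ => by ring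

lemma tinner_comm (A B : Tensor I₁ I₂ I₃) : tinner A B = tinner B A := by
  simp only [tinner, mul_comm]

lemma frobSq_eq_tinner (A : Tensor I₁ I₂ I₃) : frobSq A = tinner A A := by
  simp only [Tensor.frobSq, Tensor.tinner, sq]

lemma mfrobSq_eq_minner {m n : Type*} [Fintype m] [Fintype n] (M : Matrix m n ℝ) :
    frobSq M = minner M M := by
  simp only [MatrixAux.frobSq, MatrixAux.minner, sq]

lemma minner_sub_right {m n : Type*} [Fintype m] [Fintype n] (A B C : Matrix m n ℝ) :
    minner A (B - C) = minner A B - minner A C := by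
  simp only [minner, Matrix.sub_apply, mul_sub, Finset.sum_sub_distrib]

lemma minner_sub_left {m n : Type*} [Fintype m] [Fintype n] (A B C : Matrix m n ℝ) :
    minner (A - B) C = minner A C - minner B C := by
  simp only [minner, Matrix.sub_apply, sub_mul, Finset.sum_sub_distrib]

lemma minner_comm {m n : Type*} [Fintype m] [Fintype n] (A B : Matrix m n ℝ) :
    minner A B = minner B A := by
  simp only [minner, mul_comm]

lemma mfrobSq_sub {m n : Type*} [Fintype m] [Fintype n] (A B : Matrix m n ℝ) :
    frobSq (A - B) = frobSq A - 2 * minner A B + frobSq B := by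
  rw [mfrobSq_eq_minner, minner_sub_right, minner_sub_left, minner_sub_left,
    mfrobSq_eq_minner, mfrobSq_eq_minner, minner_comm B A]
  ring

lemma tinner_sub_left (A B C : Tensor I₁ I₂ I₃) :
    tinner (A - B) C = tinner A C - tinner B C := by
  simp only [tinner, Pi.sub_apply, sub_mul, Finset.sum_sub_distrib]

lemma tinner_sub_right (A B C : Tensor I₁ I₂ I₃) :
    tinner A (B - C) = tinner A B - tinner A C := by
  simp only [tinner, Pi.sub_apply, mul_sub, Finset.sum_sub_distrib]

lemma tinner_add_right (A B C : Tensor I₁ I₂ I₃) :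
    tinner A (B + C) = tinner A B + tinner A C := by
  simp only [tinner, Pi.add_apply, mul_add, Finset.sum_add_distrib]

lemma tinner_smul_right (r : ℝ) (A B : Tensor I₁ I₂ I₃) :
    tinner A (r • B) = r * tinner A B := by
  simp only [tinner, Pi.smul_apply, smul_eq_mul, Finset.mul_sum]
  exact Finset.sum_congr rfl fun _ _ => Finset.sum_congr rfl fun _ _ =>
    Finset.sum_congr rfl fun _ _ => by ring

lemma frobSq_sub (A B : Tensor I₁ I₂ I₃) :
    frobSq (A - B) = frobSq A - 2 * tinner A B + frobSq B := by
  rw [frobSq_eq_tinner, tinner_sub_right, tinner_sub_left, tinner_sub_left,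
    ← frobSq_eq_tinner, ← frobSq_eq_tinner, tinner_comm B A]
  ring

lemma frobSq_nonneg (A : Tensor I₁ I₂ I₃) : 0 ≤ frobSq A :=
  Finset.sum_nonneg fun _ _ => Finset.sum_nonneg fun _ _ => Finset.sum_nonneg fun _ _ => sq_nonneg _

lemma frobSq_eq_zero {A : Tensor I₁ I₂ I₃} (h : frobSq A = 0) : A = 0 := by
  funext i₁ i₂ i₃
  have h1 := (Finset.sum_eq_zero_iff_of_nonneg (fun _ _ =>
    Finset.sum_nonneg fun _ _ => Finset.sum_nonneg fun _ _ => sq_nonneg _)).mp h i₁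
    (Finset.mem_univ _)
  have h2 := (Finset.sum_eq_zero_iff_of_nonneg (fun _ _ =>
    Finset.sum_nonneg fun _ _ => sq_nonneg _)).mp h1 i₂ (Finset.mem_univ _)
  have h3 := (Finset.sum_eq_zero_iff_of_nonneg (fun _ _ => sq_nonneg _)).mp h2 i₃
    (Finset.mem_univ _)
  exact pow_eq_zero_iff two_ne_zero |>.mp h3

lemma minner_unfold1_refold1 (G : Tensor d₁ d₂ d₃) (C : Matrix (Fin d₁) (Fin d₃ × Fin d₂) ℝ) :
    minner (unfold1 G) C = tinner G (refold1 C) := by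
  simp only [minner, tinner, unfold1, refold1, Fintype.sum_prod_type]
  exact Finset.sum_congr rfl fun _ _ => Finset.sum_comm

lemma minner_unfold2_refold2 (G : Tensor d₁ d₂ d₃) (C : Matrix (Fin d₂) (Fin d₃ × Fin d₁) ℝ) :
    minner (unfold2 G) C = tinner G (refold2 C) := by
  simp only [minner, tinner, unfold2, refold2, Fintype.sum_prod_type]
  rw [show (∑ i₂ : Fin d₂, ∑ i₃ : Fin d₃, ∑ i₁ : Fin d₁, G i₁ i₂ i₃ * C i₂ (i₃, i₁))
      = ∑ i₂ : Fin d₂, ∑ i₁ : Fin d₁, ∑ i₃ : Fin d₃, G i₁ i₂ i₃ * C i₂ (i₃, i₁) from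
    Finset.sum_congr rfl fun _ _ => Finset.sum_comm]
  exact Finset.sum_comm

lemma minner_unfold3_refold3 (G : Tensor d₁ d₂ d₃) (C : Matrix (Fin d₃) (Fin d₂ × Fin d₁) ℝ) :
    minner (unfold3 G) C = tinner G (refold3 C) := by
  simp only [minner, tinner, unfold3, refold3, Fintype.sum_prod_type]
  rw [show (∑ i₃ : Fin d₃, ∑ i₂ : Fin d₂, ∑ i₁ : Fin d₁, G i₁ i₂ i₃ * C i₃ (i₂, i₁))
      = ∑ i₃ : Fin d₃, ∑ i₁ : Fin d₁, ∑ i₂ : Fin d₂, G i₁ i₂ i₃ * C i₃ (i₂, i₁) from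
    Finset.sum_congr rfl fun _ _ => Finset.sum_comm,
    show (∑ i₃ : Fin d₃, ∑ i₁ : Fin d₁, ∑ i₂ : Fin d₂, G i₁ i₂ i₃ * C i₃ (i₂, i₁))
      = ∑ i₁ : Fin d₁, ∑ i₃ : Fin d₃, ∑ i₂ : Fin d₂, G i₁ i₂ i₃ * C i₃ (i₂, i₁) from
    Finset.sum_comm]
  exact Finset.sum_congr rfl fun _ _ => Finset.sum_comm

lemma frobSq_unfold1 (G : Tensor d₁ d₂ d₃) : frobSq (unfold1 G) = frobSq G := by
  rw [mfrobSq_eq_minner, ← tinner_eq_minner_unfold1, ← frobSq_eq_tinner]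

lemma frobSq_unfold2 (G : Tensor d₁ d₂ d₃) : frobSq (unfold2 G) = frobSq G := by
  rw [mfrobSq_eq_minner, ← tinner_eq_minner_unfold2, ← frobSq_eq_tinner]

lemma frobSq_unfold3 (G : Tensor d₁ d₂ d₃) : frobSq (unfold3 G) = frobSq G := by
  rw [mfrobSq_eq_minner, ← tinner_eq_minner_unfold3, ← frobSq_eq_tinner]

lemma tinner_tucker_adj (X : Tensor I₁ I₂ I₃) (G : Tensor d₁ d₂ d₃)
    (U : Matrix (Fin I₁) (Fin d₁) ℝ) (V : Matrix (Fin I₂) (Fin d₂) ℝ)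
    (W : Matrix (Fin I₃) (Fin d₃) ℝ) :
    tinner X (tucker G U V W) = tinner (tucker X Uᵀ Vᵀ Wᵀ) G := by
  unfold tucker
  rw [tinner_mode3_adj, tinner_mode2_adj, tinner_mode1_adj, mode1_mode2_comm,
    mode1_mode3_comm, mode2_mode3_comm]

lemma frobSq_tucker (G : Tensor d₁ d₂ d₃)
    (U : Matrix (Fin I₁) (Fin d₁) ℝ) (V : Matrix (Fin I₂) (Fin d₂) ℝ)
    (W : Matrix (Fin I₃) (Fin d₃) ℝ)
    (hU : Uᵀ * U = 1) (hV : Vᵀ * V = 1) (hW : Wᵀ * W = 1) :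
    frobSq (tucker G U V W) = frobSq G := by
  rw [frobSq_eq_tinner]
  unfold tucker
  rw [tinner_mode3_iso _ _ _ hW, tinner_mode2_iso _ _ _ hV, tinner_mode1_iso _ _ _ hU,
    ← frobSq_eq_tinner]

end Aux

/-- The function
`h(G) = ∑ₙ (ρ/2)‖G₍ₙ₎ − Cₙ‖²_F + (1/2)‖X − G ×₁ U ×₂ V ×₃ W‖²_F`
has the unique minimizer `G = (1/(1+3ρ))(A + ρB)` where `A = X ×₁ Uᵀ ×₂ Vᵀ ×₃ Wᵀ` and
`B = ∑ₙ refoldₙ(Cₙ)`. -/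
theorem core_update_unique_min {I₁ I₂ I₃ d₁ d₂ d₃ : ℕ} (ρ : ℝ) (hρ : 0 < ρ)
    (X : Tensor I₁ I₂ I₃)
    (C₁ : Matrix (Fin d₁) (Fin d₃ × Fin d₂) ℝ)
    (C₂ : Matrix (Fin d₂) (Fin d₃ × Fin d₁) ℝ)
    (C₃ : Matrix (Fin d₃) (Fin d₂ × Fin d₁) ℝ)
    (U : Matrix (Fin I₁) (Fin d₁) ℝ) (V : Matrix (Fin I₂) (Fin d₂) ℝ)
    (W : Matrix (Fin I₃) (Fin d₃) ℝ)
    (hU : Uᵀ * U = 1) (hV : Vᵀ * V = 1) (hW : Wᵀ * W = 1) :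
    let h : Tensor d₁ d₂ d₃ → ℝ := fun G =>
      ρ / 2 * (MatrixAux.frobSq (Tensor.unfold1 G - C₁)
          + MatrixAux.frobSq (Tensor.unfold2 G - C₂)
          + MatrixAux.frobSq (Tensor.unfold3 G - C₃))
        + 1 / 2 * Tensor.frobSq (X - Tensor.tucker G U V W)
    let A : Tensor d₁ d₂ d₃ := Tensor.tucker X Uᵀ Vᵀ Wᵀ
    let B : Tensor d₁ d₂ d₃ := Tensor.refold1 C₁ + Tensor.refold2 C₂ + Tensor.refold3 C₃
    let Gstar : Tensor d₁ d₂ d₃ := (1 / (1 + 3 * ρ)) • (A + ρ • B)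
    (∀ G, h Gstar ≤ h G) ∧ ∀ G, h G = h Gstar → G = Gstar := by
  intro h A B Gstar
  have hpos : (0:ℝ) < 1 + 3 * ρ := by linarith
  set K : Tensor d₁ d₂ d₃ := A + ρ • B with hKdef
  have hKG : K = (1 + 3 * ρ) • Gstar := by
    show K = (1 + 3 * ρ) • ((1 / (1 + 3 * ρ)) • K)
    rw [smul_smul, mul_one_div, div_self hpos.ne', one_smul]
  have hform : ∀ G, h G = (1 + 3 * ρ) / 2 * Tensor.frobSq G - Tensor.tinner G K
      + (ρ / 2 * (MatrixAux.frobSq C₁ + MatrixAux.frobSq C₂ + MatrixAux.frobSq C₃)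
        + 1 / 2 * Tensor.frobSq X) := by
    intro G
    have e1 : MatrixAux.frobSq (Tensor.unfold1 G - C₁)
        = Tensor.frobSq G - 2 * Tensor.tinner G (Tensor.refold1 C₁) + MatrixAux.frobSq C₁ := by
      rw [mfrobSq_sub, frobSq_unfold1, minner_unfold1_refold1]
    have e2 : MatrixAux.frobSq (Tensor.unfold2 G - C₂)
        = Tensor.frobSq G - 2 * Tensor.tinner G (Tensor.refold2 C₂) + MatrixAux.frobSq C₂ := by
      rw [mfrobSq_sub, frobSq_unfold2, minner_unfold2_refold2]
    have e3 : MatrixAux.frobSq (Tensor.unfold3 G - C₃)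
        = Tensor.frobSq G - 2 * Tensor.tinner G (Tensor.refold3 C₃) + MatrixAux.frobSq C₃ := by
      rw [mfrobSq_sub, frobSq_unfold3, minner_unfold3_refold3]
    have e4 : Tensor.frobSq (X - Tensor.tucker G U V W)
        = Tensor.frobSq X - 2 * Tensor.tinner G A + Tensor.frobSq G := by
      rw [frobSq_sub, tinner_tucker_adj, frobSq_tucker G U V W hU hV hW, tinner_comm]
    have hGK : Tensor.tinner G K = Tensor.tinner G A
        + ρ * (Tensor.tinner G (Tensor.refold1 C₁) + Tensor.tinner G (Tensor.refold2 C₂)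
          + Tensor.tinner G (Tensor.refold3 C₃)) := by
      show Tensor.tinner G (A + ρ • (Tensor.refold1 C₁ + Tensor.refold2 C₂ + Tensor.refold3 C₃))
        = _
      rw [tinner_add_right, tinner_smul_right, tinner_add_right, tinner_add_right]
    show ρ / 2 * (MatrixAux.frobSq (Tensor.unfold1 G - C₁)
          + MatrixAux.frobSq (Tensor.unfold2 G - C₂)
          + MatrixAux.frobSq (Tensor.unfold3 G - C₃))
        + 1 / 2 * Tensor.frobSq (X - Tensor.tucker G U V W) = _
    rw [e1, e2, e3, e4, hGK]
    ring
  have key : ∀ G, h G = h Gstar + (1 + 3 * ρ) / 2 * Tensor.frobSq (G - Gstar) := by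
    intro G
    have h1 : Tensor.tinner G K = (1 + 3 * ρ) * Tensor.tinner G Gstar := by
      rw [hKG, tinner_smul_right]
    have h2 : Tensor.tinner Gstar K = (1 + 3 * ρ) * Tensor.frobSq Gstar := by
      rw [hKG, tinner_smul_right, ← frobSq_eq_tinner]
    rw [hform G, hform Gstar, frobSq_sub, h1, h2]
    ring
  constructor
  · intro G
    have hn : 0 ≤ (1 + 3 * ρ) / 2 * Tensor.frobSq (G - Gstar) :=
      mul_nonneg (by linarith) (frobSq_nonneg _)
    rw [key G]; linarith
  · intro G hG
    have hk := key G
    rw [hG] at hk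
    have h0 : (1 + 3 * ρ) / 2 * Tensor.frobSq (G - Gstar) = 0 := by linarith
    have hz : Tensor.frobSq (G - Gstar) = 0 := by
      rcases mul_eq_zero.mp h0 with hc | hc
      · exact absurd hc (by positivity)
      · exact hc
    have := frobSq_eq_zero hz
    exact sub_eq_zero.mp this
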